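/- For any real ε > 0, let f₀, f₁ : ℝ → ℝ be the Laplace densities f₀(x) = (ε/2)·exp(−ε·|x|) and f₁(x) = (ε/2)·exp(−ε·|x−1|). Then the total variation distance between the two Laplace distributions, ∫_ℝ max(0, f₀(x) − f₁(x)) dx (Lebesgue integral), equals 1 − exp(−ε/2). This is the pairwise total variation bound β = 1 − e^{−ε/2} of the ε-LDP Laplace mechanism on inputs in [0,1]. -/

import Mathlib

open scoped ENNReal
open Finset

noncomputable section

/-- Clamp a real number into an `ℝ≥0∞` probability (identity on `[0,1]`). -/
def prob (x : ℝ) : ℝ≥0∞ := min (ENNReal.ofReal x) 1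

lemma prob_le_one (x : ℝ) : prob x ≤ 1 := min_le_right _ _

/-- Hockey-stick divergence `D_γ(P‖Q) = ∑_y max 0 (P y − γ·Q y)`. -/
def hsDiv {Y : Type*} (P Q : PMF Y) (γ : ℝ) : ℝ :=
  ∑' y, max 0 ((P y).toReal - γ * (Q y).toReal)

/-- The shuffle of a list of PMFs: sample independently and return the multiset of results. -/
def shuffle {Y : Type*} : List (PMF Y) → PMF (Multiset Y)
  | [] => PMF.pure 0
  | μ :: μs => μ.bind fun y => (shuffle μs).map fun s => y ::ₘ s

/-- Binomial law on ℕ with `m` trials and success probability `θ` (a real, clamped). -/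
def binomN (θ : ℝ) (m : ℕ) : PMF ℕ :=
  (PMF.binomial (prob θ).toNNReal
    (by simpa using ENNReal.toNNReal_mono ENNReal.one_ne_top (prob_le_one θ)) m).map Fin.val

/-- Three-point distribution on `Fin 3` with weights `w1, w2, 1 − w1 − w2` (clamped). -/
def triR (w1 w2 : ℝ) : PMF (Fin 3) :=
  PMF.ofFintype
    ![prob w1, min (prob w2) (1 - prob w1),
      1 - (prob w1 + min (prob w2) (1 - prob w1))]
    (by
      have h : prob w1 + min (prob w2) (1 - prob w1) ≤ 1 := by
        calc prob w1 + min (prob w2) (1 - prob w1)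
            ≤ prob w1 + (1 - prob w1) := by gcongr; exact min_le_right _ _
          _ = 1 := add_tsub_cancel_of_le (prob_le_one w1)
      simp only [Fin.sum_univ_three, Matrix.cons_val_zero, Matrix.cons_val_one,
        Matrix.head_cons, Matrix.cons_val_two, Matrix.tail_cons]
      exact add_tsub_cancel_of_le h)

/-- Law of `(A+Δ₁, C−A+Δ₂)` where `C ~ Binomial(m, θC)`, `A ~ Binomial(C, θA)`, and
`(Δ₁,Δ₂)` equals `(1,0)` w.p. `w1`, `(0,1)` w.p. `w2`, `(0,0)` otherwise. -/
def lawP (m : ℕ) (θC θA w1 w2 : ℝ) : PMF (ℕ × ℕ) :=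
  (binomN θC m).bind fun c =>
    (binomN θA c).bind fun a =>
      (triR w1 w2).map fun d =>
        if d = 0 then (a + 1, c - a) else if d = 1 then (a, c - a + 1) else (a, c - a)

/-- Law of `(A+Δ₂, C−A+Δ₁)` for the same sampling process. -/
def lawQ (m : ℕ) (θC θA w1 w2 : ℝ) : PMF (ℕ × ℕ) :=
  (binomN θC m).bind fun c =>
    (binomN θA c).bind fun a =>
      (triR w1 w2).map fun d =>
        if d = 0 then (a, c - a + 1) else if d = 1 then (a + 1, c - a) else (a, c - a)

/-- `P^q_{β,p}` with `n` users: `α = β/(p−1)`, `r = pα/q`, `C ~ Binomial(n−1, 2r)`,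
`A ~ Binomial(C, 1/2)`. -/
def Pq (n : ℕ) (p β q : ℝ) : PMF (ℕ × ℕ) :=
  lawP (n - 1) (2 * (p * (β / (p - 1)) / q)) (1 / 2) (p * (β / (p - 1))) (β / (p - 1))

/-- `Q^q_{β,p}`. -/
def Qq (n : ℕ) (p β q : ℝ) : PMF (ℕ × ℕ) :=
  lawQ (n - 1) (2 * (p * (β / (p - 1)) / q)) (1 / 2) (p * (β / (p - 1))) (β / (p - 1))

/-- `CDF_{c,θ}[c₁,c₂] = ∑_{c₁ ≤ i ≤ c₂, 0 ≤ i ≤ c} C(c,i) θ^i (1−θ)^{c−i}`. -/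
def binCDF (c : ℕ) (θ : ℝ) (c1 c2 : ℝ) : ℝ :=
  ∑ i ∈ Finset.range (c + 1),
    if c1 ≤ (i : ℝ) ∧ (i : ℝ) ≤ c2 then (c.choose i : ℝ) * θ ^ i * (1 - θ) ^ (c - i) else 0

/-- Expectation of `f` under `Binomial(m, θ)`. -/
def binExp (m : ℕ) (θ : ℝ) (f : ℕ → ℝ) : ℝ :=
  ∑ c ∈ Finset.range (m + 1), (m.choose c : ℝ) * θ ^ c * (1 - θ) ^ (m - c) * f c

/-- The `(p, β)`-variation property of the first randomizer. -/
def VariationProp {X Y : Type*} (R1 : X → PMF Y) (p β : ℝ) : Prop :=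
  ∀ x x' : X, (∀ y, (R1 x y).toReal ≤ p * (R1 x' y).toReal) ∧ hsDiv (R1 x) (R1 x') 1 ≤ β

/-- The `q`-ratio property of the first randomizer w.r.t. the others. -/
def RatioProp {X Y : Type*} {m : ℕ} (R1 : X → PMF Y) (R : Fin m → X → PMF Y) (q : ℝ) : Prop :=
  ∀ (i : Fin m) (x x' : X) (y : Y), (R1 x y).toReal ≤ q * (R i x' y).toReal


open MeasureTheory Set Real in
lemma expIicInt (ε c : ℝ) (hε : 0 < ε) :
    IntegrableOn (fun x => Real.exp (ε * x)) (Set.Iic c) := by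
  rw [← integrable_indicator_iff (measurableSet_Iic : MeasurableSet (Set.Iic c))]
  have h : (Set.Iic c).indicator (fun x => Real.exp (ε * x))
      = fun x => ((Set.Iic (ε * c)).indicator Real.exp) (ε * x) := by
    ext x
    by_cases hx : x ≤ c
    · rw [Set.indicator_of_mem (Set.mem_Iic.2 hx), Set.indicator_of_mem (Set.mem_Iic.2 ((mul_le_mul_iff_right₀ hε).2 hx))]
    · rw [Set.indicator_of_notMem (fun h => hx (Set.mem_Iic.1 h)), Set.indicator_of_notMem
        (fun h => hx ((mul_le_mul_iff_right₀ hε).1 (Set.mem_Iic.1 h)))]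
  rw [h]
  exact ((integrable_indicator_iff measurableSet_Iic).2 (integrableOn_exp_Iic _)).comp_mul_left' hε.ne'

open MeasureTheory Set Real in
lemma expIicVal (ε c : ℝ) (hε : 0 < ε) :
    ∫ x in Set.Iic c, Real.exp (ε * x) = ε⁻¹ * Real.exp (ε * c) := by
  have h1 := integral_comp_mul_left_Ioi (fun x => Real.exp (-x)) (-c) hε
  rw [integral_exp_neg_Ioi] at h1
  have h2 := integral_comp_neg_Ioi (-c) (fun x => Real.exp (ε * x))
  simp only [mul_neg, neg_neg] at h1 h2
  rw [← h2]
  simp only [← neg_mul, neg_mul_comm] at h1 ⊢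
  rw [h1, smul_eq_mul]

open MeasureTheory in
theorem stmt18 (ε : ℝ) (hε : 0 < ε) :
    ∫ x : ℝ, max 0 (ε / 2 * Real.exp (-(ε * |x|)) - ε / 2 * Real.exp (-(ε * |x - 1|))) =
      1 - Real.exp (-(ε / 2)) := by
  have hε2 : (0:ℝ) < ε / 2 := by linarith
  have hmax : (fun x : ℝ => max 0 (ε / 2 * Real.exp (-(ε * |x|)) -
        ε / 2 * Real.exp (-(ε * |x - 1|))))
      = (Set.Iic (1/2 : ℝ)).indicator
        (fun x => ε / 2 * Real.exp (-(ε * |x|)) - ε / 2 * Real.exp (-(ε * |x - 1|))) := by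
    funext x
    by_cases hx : x ≤ 1/2
    · rw [Set.indicator_of_mem (Set.mem_Iic.2 hx)]
      refine max_eq_right (sub_nonneg.2 ?_)
      have h : |x| ≤ |x - 1| := by
        rcases abs_cases x with ⟨h1, h2⟩ | ⟨h1, h2⟩ <;>
          rcases abs_cases (x - 1) with ⟨h3, h4⟩ | ⟨h3, h4⟩ <;> linarith
      exact mul_le_mul_of_nonneg_left (Real.exp_le_exp.2 (by nlinarith)) hε2.le
    · rw [Set.indicator_of_notMem (fun h => hx (Set.mem_Iic.1 h))]
      refine max_eq_left (sub_nonpos.2 ?_)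
      push_neg at hx
      have h : |x - 1| ≤ |x| := by
        rcases abs_cases x with ⟨h1, h2⟩ | ⟨h1, h2⟩ <;>
          rcases abs_cases (x - 1) with ⟨h3, h4⟩ | ⟨h3, h4⟩ <;> linarith
      exact mul_le_mul_of_nonneg_left (Real.exp_le_exp.2 (by nlinarith)) hε2.le
  -- f1 on Iic (1/2)
  have hf1eq : Set.EqOn (fun x : ℝ => ε / 2 * Real.exp (-(ε * |x - 1|)))
      (fun x => (ε / 2 * Real.exp (-ε)) * Real.exp (ε * x)) (Set.Iic (1/2 : ℝ)) := by
    intro x hx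
    have hx' : x ≤ 1/2 := hx
    simp only [abs_of_nonpos (show x - 1 ≤ 0 by linarith)]
    rw [mul_assoc, ← Real.exp_add]
    congr 2
    ring
  have hf1int : IntegrableOn (fun x : ℝ => ε / 2 * Real.exp (-(ε * |x - 1|)))
      (Set.Iic (1/2 : ℝ)) :=
    MeasureTheory.IntegrableOn.congr_fun ((expIicInt ε (1/2) hε).const_mul _) hf1eq.symm measurableSet_Iic
  have hI1 : ∫ x in Set.Iic (1/2 : ℝ), ε / 2 * Real.exp (-(ε * |x - 1|))
      = 1/2 * Real.exp (-(ε/2)) := by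
    rw [setIntegral_congr_fun measurableSet_Iic hf1eq, integral_const_mul, expIicVal ε (1/2) hε,
      show ε / 2 * Real.exp (-ε) * (ε⁻¹ * Real.exp (ε * (1 / 2)))
        = (ε * ε⁻¹) * (1/2 * (Real.exp (-ε) * Real.exp (ε * (1/2)))) by ring,
      mul_inv_cancel₀ hε.ne', one_mul, ← Real.exp_add]
    congr 2
    ring
  -- f0 on Iic 0
  have hf0eq1 : Set.EqOn (fun x : ℝ => ε / 2 * Real.exp (-(ε * |x|)))
      (fun x => ε / 2 * Real.exp (ε * x)) (Set.Iic (0:ℝ)) := by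
    intro x hx
    simp only [abs_of_nonpos (Set.mem_Iic.1 hx)]
    congr 2
    ring
  have hint01 : IntegrableOn (fun x : ℝ => ε / 2 * Real.exp (-(ε * |x|))) (Set.Iic (0:ℝ)) :=
    MeasureTheory.IntegrableOn.congr_fun ((expIicInt ε 0 hε).const_mul (ε/2)) hf0eq1.symm measurableSet_Iic
  have hI01 : ∫ x in Set.Iic (0:ℝ), ε / 2 * Real.exp (-(ε * |x|)) = 1/2 := by
    rw [setIntegral_congr_fun measurableSet_Iic hf0eq1, integral_const_mul, expIicVal ε 0 hε,
      mul_zero, Real.exp_zero]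
    field_simp
  -- f0 on Ioc 0 (1/2)
  have hcont : Continuous (fun x : ℝ => ε / 2 * Real.exp (-(ε * x))) := by fun_prop
  have hf0eq2 : Set.EqOn (fun x : ℝ => ε / 2 * Real.exp (-(ε * |x|)))
      (fun x => ε / 2 * Real.exp (-(ε * x))) (Set.Ioc (0:ℝ) (1/2)) := by
    intro x hx
    simp only [abs_of_pos hx.1]
  have hint02 : IntegrableOn (fun x : ℝ => ε / 2 * Real.exp (-(ε * |x|)))
      (Set.Ioc (0:ℝ) (1/2)) :=
    hcont.integrableOn_Ioc.congr_fun hf0eq2.symm measurableSet_Ioc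
  have hI02 : ∫ x in Set.Ioc (0:ℝ) (1/2), ε / 2 * Real.exp (-(ε * |x|))
      = 1/2 - 1/2 * Real.exp (-(ε/2)) := by
    rw [setIntegral_congr_fun measurableSet_Ioc hf0eq2,
      ← intervalIntegral.integral_of_le (by norm_num : (0:ℝ) ≤ 1/2),
      intervalIntegral.integral_const_mul]
    have harg : (fun x : ℝ => Real.exp (-(ε * x))) = fun x => Real.exp ((-ε) * x) := by
      funext x; rw [neg_mul]
    rw [harg, intervalIntegral.integral_comp_mul_left Real.exp (neg_ne_zero.2 hε.ne'),
      integral_exp]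
    rw [mul_zero, Real.exp_zero, smul_eq_mul,
      show ε / 2 * ((-ε)⁻¹ * (Real.exp (-ε * (1/2)) - 1))
        = (ε * ε⁻¹) * (1/2 * (1 - Real.exp (-ε * (1/2)))) by
          rw [inv_neg]; ring,
      mul_inv_cancel₀ hε.ne', one_mul]
    rw [show (-ε * (1/2) : ℝ) = -(ε/2) by ring]
    ring
  have hI0 : ∫ x in Set.Iic (1/2 : ℝ), ε / 2 * Real.exp (-(ε * |x|))
      = 1 - 1/2 * Real.exp (-(ε/2)) := by
    rw [← Set.Iic_union_Ioc_eq_Iic (by norm_num : (0:ℝ) ≤ 1/2),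
      setIntegral_union (Set.Iic_disjoint_Ioc le_rfl) measurableSet_Ioc hint01 hint02,
      hI01, hI02]
    ring
  have hf0int : IntegrableOn (fun x : ℝ => ε / 2 * Real.exp (-(ε * |x|)))
      (Set.Iic (1/2 : ℝ)) := by
    rw [← Set.Iic_union_Ioc_eq_Iic (by norm_num : (0:ℝ) ≤ 1/2)]
    exact hint01.union hint02
  rw [hmax, integral_indicator measurableSet_Iic, integral_sub hf0int hf1int, hI0, hI1]
  ring

end
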